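/- Let u₁, u₂ be independent uniformly distributed random points on the unit sphere S^{d-1} ⊆ ℝ^d with d ≥ 3. Then for every η ∈ (0,1), P(‖u₁ - u₂‖₂ ≤ η) < η^{d-1}. -/

import Mathlib

open MeasureTheory ProbabilityTheory Metric

open Real RealInnerProductSpace
open scoped Pointwise


lemma gamma_aux : ∀ m : ℕ, 4 * Real.Gamma (((m:ℝ)+3)/2+1)^2 ≤ ((m:ℝ)+3) * π * Real.Gamma ((((m:ℝ)+3)+1)/2)^2 := by
  have h32 : Real.Gamma ((3:ℝ)/2) = Real.sqrt π / 2 := by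
    have : ((3:ℝ)/2) = 1/2 + 1 := by norm_num
    rw [this, Real.Gamma_add_one (by norm_num), Real.Gamma_one_half_eq]; ring
  have h52 : Real.Gamma ((5:ℝ)/2) = 3/4 * Real.sqrt π := by
    rw [show (5:ℝ)/2 = 3/2 + 1 by norm_num, Real.Gamma_add_one (by norm_num), h32]; ring
  have hs : Real.sqrt π ^ 2 = π := Real.sq_sqrt Real.pi_pos.le
  intro m
  induction m using Nat.strong_induction_on with
  | _ m IH =>
    match m with
    | 0 =>
      push_cast
      norm_num
      rw [h52]
      nlinarith [Real.pi_pos]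
    | 1 =>
      push_cast
      rw [show ((1:ℝ)+3)/2 + 1 = 3 by norm_num, show ((1:ℝ)+3+1)/2 = 5/2 by norm_num,
        show (3:ℝ) = 2 + 1 by norm_num, Real.Gamma_add_one (by norm_num), Real.Gamma_two, h52]
      nlinarith [Real.pi_gt_three]
    | (k+2) =>
      have h := IH k (by omega)
      push_cast
      set x : ℝ := (k:ℝ) with hxdef
      have hx : (0:ℝ) ≤ x := Nat.cast_nonneg k
      have g1 : Real.Gamma ((x+2+3)/2+1) = ((x+3)/2+1) * Real.Gamma ((x+3)/2+1) := by
        rw [show (x+2+3)/2+1 = ((x+3)/2+1) + 1 by ring, Real.Gamma_add_one (by positivity)]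
      have g2 : Real.Gamma ((x+2+3+1)/2) = ((x+3+1)/2) * Real.Gamma ((x+3+1)/2) := by
        rw [show (x+2+3+1)/2 = ((x+3+1)/2) + 1 by ring, Real.Gamma_add_one (by positivity)]
      rw [g1, g2]
      have hG2 : (0:ℝ) ≤ Real.Gamma ((x+3+1)/2)^2 := sq_nonneg _
      nlinarith [mul_le_mul_of_nonneg_left h (sq_nonneg ((x+3)/2+1)), Real.pi_pos,
        mul_nonneg (mul_nonneg hx Real.pi_pos.le) hG2]

lemma gamma_sq_ineq (d : ℕ) (hd : 3 ≤ d) :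
    4 * Real.Gamma ((d:ℝ)/2+1)^2 ≤ (d:ℝ) * π * Real.Gamma (((d:ℝ)+1)/2)^2 := by
  obtain ⟨m, rfl⟩ : ∃ m, d = m + 3 := ⟨d - 3, by omega⟩
  push_cast
  exact gamma_aux m


lemma numfact (N β p : ℝ) (hN : 2 ≤ N) (hβ0 : 0 ≤ β) (h4β : 4*β ≤ N)
    (hp0 : 0 ≤ p) (hp1 : p*(1+β) ≤ 1) : p*(1+2*β)^2 < 4*(N+1) := by
  have h5 : (1+2*β)^2 < 4*(N+1)*(1+β) := by nlinarith [mul_le_mul_of_nonneg_right h4β hβ0]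
  have A : p*(1+β)*(1+2*β)^2 ≤ (1+2*β)^2 := by
    nlinarith [mul_le_mul_of_nonneg_right hp1 (sq_nonneg (1+2*β))]
  have A' : (p*(1+2*β)^2) * (1+β) < (4*(N+1)) * (1+β) := by nlinarith
  exact lt_of_mul_lt_mul_right A' (by linarith)

lemma corefact (Y N G1 G2 : ℝ) (hY : 0 ≤ Y) (hg : 4*G2^2 ≤ (N+1)*π*G1^2)
    (hnum : Y*(N+1) < 4) (hG1 : 0 < G1) : Y * G2^2 < π * G1^2 := by
  have hπ : 0 < π := Real.pi_pos
  have t1 : Y * (4*G2^2) ≤ Y * ((N+1)*π*G1^2) := mul_le_mul_of_nonneg_left hg hY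
  have t2 : (Y*(N+1)) * (π*G1^2) < 4 * (π*G1^2) :=
    mul_lt_mul_of_pos_right hnum (by positivity)
  nlinarith [t1, t2]

set_option maxHeartbeats 1000000 in
lemma key_ineq (n : ℕ) (hn : 2 ≤ n) (η c ρ k : ℝ) (hη0 : 0 < η) (hη1 : η < 1)
    (hc : c = 1 - η^2/2) (hρ : ρ = Real.sqrt (1-c^2)) (hk : k = ρ/c) :
    Real.sqrt π ^ n / Real.Gamma ((n:ℝ)/2+1) *
      (k ^ n * (c^(n+1)/((n:ℝ)+1)) + ρ ^ n * (1-c))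
    < η ^ n * (Real.sqrt π ^ (n+1) / Real.Gamma (((n:ℝ)+1)/2+1)) := by
  have hη2 : η^2 < 1 := by nlinarith
  set N : ℝ := (n:ℝ) with hN
  have hN2 : (2:ℝ) ≤ N := by rw [hN]; exact_mod_cast hn
  set α : ℝ := η^2/4 with hα
  have hα0 : 0 < α := by positivity
  have hα4 : α < 1/4 := by rw [hα]; linarith
  have hc0 : 0 < c := by rw [hc]; linarith
  have hc1 : c < 1 := by
    rw [hc]
    have : 0 < η^2 := pow_pos hη0 2
    linarith
  have h1c2 : 1 - c^2 = η^2 * (1-α) := by rw [hc, hα]; ring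
  have h1c2nn : 0 ≤ 1 - c^2 := by
    rw [h1c2]
    exact mul_nonneg (sq_nonneg η) (by linarith)
  have hρ0 : 0 ≤ ρ := by rw [hρ]; exact Real.sqrt_nonneg _
  have hρ2 : ρ^2 = 1 - c^2 := by rw [hρ]; exact Real.sq_sqrt h1c2nn
  have hkc : k^n * c^(n+1) = ρ^n * c := by
    rw [hk, div_pow, pow_succ]
    field_simp
  set S : ℝ := Real.sqrt π with hS
  have hSpos : 0 < S := Real.sqrt_pos.mpr Real.pi_pos
  have hS2 : S^2 = π := Real.sq_sqrt Real.pi_pos.le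
  have hG1pos : 0 < Real.Gamma (N/2+1) := Real.Gamma_pos_of_pos (by positivity)
  have hG2pos : 0 < Real.Gamma ((N+1)/2+1) := Real.Gamma_pos_of_pos (by positivity)
  set G1 : ℝ := Real.Gamma (N/2+1) with hG1
  set G2 : ℝ := Real.Gamma ((N+1)/2+1) with hG2
  set q : ℝ := c/(N+1) + (1-c) with hqdef
  have hqnn : 0 ≤ q := by
    rw [hqdef]
    have h1 : 0 ≤ c/(N+1) := by positivity
    linarith
  set X : ℝ := ρ^n * q with hX
  have hXnn : 0 ≤ X := by positivity
  set β : ℝ := N * α with hβ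
  have hβ0 : 0 ≤ β := by rw [hβ]; positivity
  have hq : q = (1+2*β)/(N+1) := by rw [hqdef, hc, hβ, hα]; field_simp; ring
  have hp0 : (0:ℝ) ≤ (1-α)^n := pow_nonneg (by linarith) n
  have hp1 : (1-α)^n * (1+β) ≤ 1 := by
    have hBer : 1 + N*α ≤ (1+α)^n := by
      have := one_add_mul_le_pow (show (-2:ℝ) ≤ α by linarith) n
      rw [hN]; linarith
    have step : (1-α)^n * (1+β) ≤ (1-α)^n * (1+α)^n := by
      apply mul_le_mul_of_nonneg_left _ hp0
      rw [hβ]; exact hBer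
    have e : (1-α)^n * (1+α)^n = (1-α^2)^n := by rw [← mul_pow]; ring_nf
    refine step.trans ?_
    rw [e]
    have e2 : 1 - α^2 = (1-α)*(1+α) := by ring
    apply pow_le_one₀ (by rw [e2]; exact mul_nonneg (by linarith) (by linarith))
      (by linarith [sq_nonneg α])
  have h4β : 4*β ≤ N := by
    rw [hβ]
    linarith [mul_nonneg (show (0:ℝ) ≤ N by linarith) (show (0:ℝ) ≤ 1-4*α by linarith)]
  have core2 : (1-α)^n * (1+2*β)^2 < 4*(N+1) := numfact N β _ hN2 hβ0 h4β hp0 hp1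
  have hnum : (1-α)^n * q^2 * (N+1) < 4 := by
    have hNpos : (0:ℝ) < N + 1 := by linarith
    have hq2 : q^2 * (N+1) = (1+2*β)^2 / (N+1) := by rw [hq]; field_simp
    have e : (1-α)^n * q^2 * (N+1) = ((1-α)^n * (1+2*β)^2) / (N+1) := by
      rw [mul_assoc, hq2]; ring
    rw [e, div_lt_iff₀ hNpos]
    linarith [core2]
  have hg := gamma_sq_ineq (n+1) (by omega)
  push_cast at hg
  rw [show (((n:ℝ)+1)+1)/2 = (n:ℝ)/2+1 by ring] at hg
  rw [← hN, ← hG1, ← hG2] at hg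
  have core : ((1-α)^n * q^2) * G2^2 < π * G1^2 :=
    corefact _ N G1 G2 (by positivity) hg hnum hG1pos
  have hX2 : X^2 = (η^n)^2 * ((1-α)^n * q^2) := by
    rw [hX, mul_pow]
    have e : (ρ^n)^2 = (ρ^2)^n := by rw [← pow_mul, ← pow_mul, mul_comm]
    rw [e, hρ2, h1c2, mul_pow]
    have e2 : (η^2)^n = (η^n)^2 := by rw [← pow_mul, ← pow_mul, mul_comm]
    rw [e2]; ring
  have main : X * G2 < (η^n * S) * G1 := by
    have hsq : (X*G2)^2 < ((η^n*S)*G1)^2 := by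
      have e1 : (X*G2)^2 = (η^n)^2 * (((1-α)^n*q^2)*G2^2) := by rw [mul_pow, hX2]; ring
      have e2 : ((η^n*S)*G1)^2 = (η^n)^2 * (π*G1^2) := by
        rw [mul_pow, mul_pow, hS2]; ring
      rw [e1, e2]
      exact mul_lt_mul_of_pos_left core (by positivity)
    exact lt_of_pow_lt_pow_left₀ 2 (by positivity) hsq
  have hsum : k ^ n * (c^(n+1)/(N+1)) + ρ ^ n * (1-c) = X := by
    have e1 : k^n*(c^(n+1)/(N+1)) = (k^n*c^(n+1))/(N+1) := by ring
    rw [hX, hqdef, e1, hkc]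
    ring
  have lhs_eq : S ^ n / G1 * (k ^ n * (c^(n+1)/(N+1)) + ρ ^ n * (1-c)) = (S^n * X)/G1 := by
    rw [hsum]; ring
  have rhs_eq : η ^ n * (S ^ (n+1) / G2) = (S^n * (η^n * S))/G2 := by
    rw [pow_succ]; ring
  rw [lhs_eq, rhs_eq, div_lt_div_iff₀ hG1pos hG2pos]
  calc S^n * X * G2 = (X * G2) * S^n := by ring
    _ < ((η^n * S) * G1) * S^n := mul_lt_mul_of_pos_right main (pow_pos hSpos n)
    _ = S^n * (η^n * S) * G1 := by ring

open RealInnerProductSpace in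
lemma cone_vol_bound_e0 (n : ℕ) (hn : 2 ≤ n) (c ρ k : ℝ) (hc0 : 0 < c) (hc1 : c < 1)
    (hρ : ρ = Real.sqrt (1-c^2)) (hk : k = ρ/c) :
    volume {z : EuclideanSpace ℝ (Fin (n+1)) | ‖z‖ ≤ 1 ∧
        c * ‖z‖ ≤ ⟪EuclideanSpace.single (0 : Fin (n+1)) (1:ℝ), z⟫} ≤
      ENNReal.ofReal (Real.sqrt π^n / Real.Gamma ((n:ℝ)/2+1) *
        (k^n * (c^(n+1)/((n:ℝ)+1)) + ρ^n * (1-c))) := by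
  haveI : Nonempty (Fin n) := ⟨⟨0, by omega⟩⟩
  have h1c2nn : (0:ℝ) ≤ 1 - c^2 := by nlinarith
  have hρ0 : 0 ≤ ρ := by rw [hρ]; exact Real.sqrt_nonneg _
  have hρ2 : ρ^2 = 1 - c^2 := by rw [hρ]; exact Real.sq_sqrt h1c2nn
  have hk0 : 0 ≤ k := by rw [hk]; positivity
  set K : ℝ := Real.sqrt π^n / Real.Gamma ((n:ℝ)/2+1) with hKdef
  have hK0 : 0 ≤ K := by
    rw [hKdef]
    have := Real.Gamma_pos_of_pos (show (0:ℝ) < (n:ℝ)/2+1 by positivity)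
    positivity
  set D₂ : Set (ℝ × (Fin n → ℝ)) :=
    {p | p.1 ∈ Set.Icc (0:ℝ) 1 ∧ (∑ j, (p.2 j)^2) ≤ (min (k*p.1) ρ)^2} with hD₂def
  have hD₂ : MeasurableSet D₂ := by
    have : D₂ = (Prod.fst ⁻¹' (Set.Icc (0:ℝ) 1)) ∩
        {p : ℝ × (Fin n → ℝ) | (∑ j, (p.2 j)^2) ≤ (min (k*p.1) ρ)^2} := rfl
    rw [this]
    refine (measurable_fst measurableSet_Icc).inter (measurableSet_le ?_ ?_)
    · exact Finset.measurable_sum _ fun j _ =>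
        ((measurable_pi_apply j).comp measurable_snd).pow_const 2
    · exact (((measurable_fst.const_mul k).min measurable_const).pow_const 2)
  set g := (MeasurableEquiv.toLp 2 (Fin (n+1) → ℝ)).symm.trans
    (MeasurableEquiv.piFinSuccAbove (fun _ : Fin (n+1) => ℝ) 0) with hgdef
  have hg : MeasurePreserving g volume volume :=
    (volume_preserving_piFinSuccAbove (fun _ : Fin (n+1) => ℝ) 0).comp
      (EuclideanSpace.volume_preserving_symm_measurableEquiv_toLp (Fin (n+1)))
  have hsub : {z : EuclideanSpace ℝ (Fin (n+1)) | ‖z‖ ≤ 1 ∧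
      c * ‖z‖ ≤ ⟪EuclideanSpace.single (0 : Fin (n+1)) (1:ℝ), z⟫} ⊆ g ⁻¹' D₂ := by
    rintro z ⟨hz1, hz2⟩
    have hinner : ⟪EuclideanSpace.single (0 : Fin (n+1)) (1:ℝ), z⟫ = z 0 := by
      rw [EuclideanSpace.inner_single_left]; simp
    rw [hinner] at hz2
    have hnz : (0:ℝ) ≤ ‖z‖ := norm_nonneg z
    have ht0 : 0 ≤ z 0 := le_trans (by positivity) hz2
    have hnormsq : ‖z‖^2 = ∑ i, (z i)^2 := by
      rw [EuclideanSpace.norm_eq, Real.sq_sqrt (by positivity)]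
      simp [sq_abs]
    have htle : z 0 ≤ ‖z‖ := by
      have h1 : (z 0)^2 ≤ ∑ i, (z i)^2 := by
        exact Finset.single_le_sum (f := fun i => (z i)^2) (fun i _ => sq_nonneg _)
          (Finset.mem_univ 0)
      nlinarith
    have hcsq : c^2 * ‖z‖^2 ≤ (z 0)^2 := by
      nlinarith [mul_self_le_mul_self (mul_nonneg hc0.le hnz) hz2]
    have hgz1 : (g z).1 = z 0 := rfl
    have hgz2 : ∀ j : Fin n, (g z).2 j = z j.succ := by
      intro j
      show z ((0 : Fin (n+1)).succAbove j) = z j.succ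
      rw [Fin.zero_succAbove]
    constructor
    · rw [hgz1]; exact ⟨ht0, le_trans (le_trans htle hz1) le_rfl⟩
    · have hsum : (∑ j : Fin n, ((g z).2 j)^2) = (∑ i, (z i)^2) - (z 0)^2 := by
        simp_rw [hgz2]
        rw [Fin.sum_univ_succ (f := fun i => (z i)^2)]
        ring
      rw [hgz1, hsum, ← hnormsq]
      rcases le_total (k * z 0) ρ with hmin | hmin
      · rw [min_eq_left hmin]
        have hkc : k * c = ρ := by rw [hk]; field_simp
        have hk2 : k^2 * c^2 = 1 - c^2 := by
          have e : (k*c)^2 = ρ^2 := by rw [hkc]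
          rw [hρ2] at e; linear_combination e
        have e3 : c^2*(k^2*(z 0)^2) = (1-c^2)*(z 0)^2 := by linear_combination (z 0)^2 * hk2
        have key2 : c^2 * (‖z‖^2 - (z 0)^2) ≤ c^2*(k^2*(z 0)^2) := by
          rw [e3]; linarith [hcsq]
        have key3 : ‖z‖^2 - (z 0)^2 ≤ k^2*(z 0)^2 :=
          le_of_mul_le_mul_left key2 (by positivity)
        calc ‖z‖^2 - (z 0)^2 ≤ k^2*(z 0)^2 := key3
          _ = (k*(z 0))^2 := by ring
      · rw [min_eq_right hmin, hρ2]
        have hX1 : ‖z‖^2 ≤ 1 := pow_le_one₀ hnz hz1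
        have s1 : ‖z‖^2 - (z 0)^2 ≤ (1-c^2) * ‖z‖^2 := by linarith [hcsq]
        have s2 : (1-c^2) * ‖z‖^2 ≤ (1-c^2) * 1 := mul_le_mul_of_nonneg_left hX1 h1c2nn
        linarith
  refine le_trans (measure_mono hsub) ?_
  rw [hg.measure_preimage hD₂.nullMeasurableSet]
  rw [Measure.volume_eq_prod, Measure.prod_apply hD₂]
  have hsec : ∀ t : ℝ, volume (Prod.mk t ⁻¹' D₂) =
      Set.indicator (Set.Icc (0:ℝ) 1)
        (fun s => ENNReal.ofReal ((min (k*s) ρ)^n * K)) t := by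
    intro t
    by_cases ht : t ∈ Set.Icc (0:ℝ) 1
    · rw [Set.indicator_of_mem ht]
      have hmt : 0 ≤ min (k*t) ρ := le_min (mul_nonneg hk0 ht.1) hρ0
      have hpre : Prod.mk t ⁻¹' D₂ = {y : Fin n → ℝ | (∑ j, (y j)^2) ≤ (min (k*t) ρ)^2} := by
        ext y
        simp only [Set.mem_preimage, hD₂def, Set.mem_setOf_eq]
        exact ⟨fun h => h.2, fun h => ⟨ht, h⟩⟩
      rw [hpre]
      have hmeasS : MeasurableSet {y : Fin n → ℝ | (∑ j, (y j)^2) ≤ (min (k*t) ρ)^2} :=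
        measurableSet_le (Finset.measurable_sum _ fun j _ =>
          (measurable_pi_apply j).pow_const 2) measurable_const
      rw [← (EuclideanSpace.volume_preserving_symm_measurableEquiv_toLp (Fin n)).measure_preimage
        hmeasS.nullMeasurableSet]
      have hball : (MeasurableEquiv.toLp 2 (Fin n → ℝ)).symm ⁻¹'
          {y : Fin n → ℝ | (∑ j, (y j)^2) ≤ (min (k*t) ρ)^2}
          = closedBall (0 : EuclideanSpace ℝ (Fin n)) (min (k*t) ρ) := by
        ext w
        simp only [Set.mem_preimage, Set.mem_setOf_eq, mem_closedBall_zero_iff]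
        have hwsum : ∀ j, ((MeasurableEquiv.toLp 2 (Fin n → ℝ)).symm w) j = w j := fun j => rfl
        simp_rw [hwsum]
        have hnw : ‖w‖ = Real.sqrt (∑ j, (w j)^2) := by
          rw [EuclideanSpace.norm_eq]
          congr 1
          refine Finset.sum_congr rfl fun j _ => ?_
          rw [Real.norm_eq_abs, sq_abs]
        rw [hnw]
        constructor
        · intro h
          have h1 : Real.sqrt (∑ j, (w j)^2) ≤ Real.sqrt ((min (k*t) ρ)^2) :=
            Real.sqrt_le_sqrt h
          rwa [Real.sqrt_sq hmt] at h1
        · intro h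
          have h2 := mul_self_le_mul_self (Real.sqrt_nonneg (∑ j, (w j)^2)) h
          rw [Real.mul_self_sqrt (by positivity)] at h2
          calc (∑ j, (w j)^2) ≤ (min (k*t) ρ) * (min (k*t) ρ) := h2
            _ = (min (k*t) ρ)^2 := (sq (min (k*t) ρ)).symm
      rw [hball, EuclideanSpace.volume_closedBall, Fintype.card_fin,
        ENNReal.ofReal_mul (pow_nonneg hmt n), ← ENNReal.ofReal_pow hmt, hKdef]
    · rw [Set.indicator_of_notMem ht]
      have : Prod.mk t ⁻¹' D₂ = ∅ := by
        ext y; simp only [Set.mem_preimage, hD₂def, Set.mem_setOf_eq, Set.mem_empty_iff_false,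
          iff_false]
        intro hy
        exact ht hy.1
      rw [this, measure_empty]
  rw [lintegral_congr hsec, lintegral_indicator measurableSet_Icc]
  rw [show Set.Icc (0:ℝ) 1 = Set.Icc 0 c ∪ Set.Ioc c 1 from
    (Set.Icc_union_Ioc_eq_Icc hc0.le hc1.le).symm]
  rw [lintegral_union measurableSet_Ioc ((Set.Iic_disjoint_Ioc (le_refl c)).mono_left Set.Icc_subset_Iic_self)]
  have hI1 : (∫⁻ t in Set.Icc (0:ℝ) c, ENNReal.ofReal ((min (k*t) ρ)^n * K)) ≤
      ENNReal.ofReal (K * k^n * (c^(n+1)/((n:ℝ)+1))) := by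
    have step1 : (∫⁻ t in Set.Icc (0:ℝ) c, ENNReal.ofReal ((min (k*t) ρ)^n * K)) ≤
        ∫⁻ t in Set.Icc (0:ℝ) c, ENNReal.ofReal ((k*t)^n * K) := by
      apply setLIntegral_mono (((measurable_id.const_mul k).pow_const n).mul_const K).ennreal_ofReal
      intro t ht
      apply ENNReal.ofReal_le_ofReal
      apply mul_le_mul_of_nonneg_right _ hK0
      exact pow_le_pow_left₀ (le_min (mul_nonneg hk0 ht.1) hρ0) (min_le_left _ _) n
    refine step1.trans ?_
    rw [← ofReal_integral_eq_lintegral_ofReal]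
    · apply ENNReal.ofReal_le_ofReal
      rw [integral_Icc_eq_integral_Ioc, ← intervalIntegral.integral_of_le hc0.le]
      have e : (fun t : ℝ => (k*t)^n*K) = fun t : ℝ => (k^n*K) * t^n := by
        funext t; rw [mul_pow]; ring
      rw [e, intervalIntegral.integral_const_mul, integral_pow]
      rw [zero_pow (Nat.succ_ne_zero n)]
      apply le_of_eq
      ring
    · exact (((continuous_const.mul continuous_id).pow n).mul continuous_const).integrableOn_Icc
    · refine (ae_restrict_iff' measurableSet_Icc).2 (Filter.Eventually.of_forall fun t ht => ?_)
      have : 0 ≤ k*t := mul_nonneg hk0 ht.1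
      positivity
  have hI2 : (∫⁻ t in Set.Ioc c 1, ENNReal.ofReal ((min (k*t) ρ)^n * K)) ≤
      ENNReal.ofReal (ρ^n * K * (1-c)) := by
    have step1 : (∫⁻ t in Set.Ioc c 1, ENNReal.ofReal ((min (k*t) ρ)^n * K)) ≤
        ∫⁻ _ in Set.Ioc c 1, ENNReal.ofReal (ρ^n * K) := by
      apply setLIntegral_mono measurable_const
      intro t ht
      apply ENNReal.ofReal_le_ofReal
      apply mul_le_mul_of_nonneg_right _ hK0
      have ht0 : (0:ℝ) ≤ t := le_trans hc0.le ht.1.le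
      exact pow_le_pow_left₀ (le_min (mul_nonneg hk0 ht0) hρ0) (min_le_right _ _) n
    refine step1.trans ?_
    rw [setLIntegral_const, Real.volume_Ioc,
      ← ENNReal.ofReal_mul (mul_nonneg (pow_nonneg hρ0 n) hK0)]
  calc (∫⁻ t in Set.Icc (0:ℝ) c, ENNReal.ofReal ((min (k*t) ρ)^n * K)) +
        ∫⁻ t in Set.Ioc c 1, ENNReal.ofReal ((min (k*t) ρ)^n * K)
      ≤ ENNReal.ofReal (K * k^n * (c^(n+1)/((n:ℝ)+1))) + ENNReal.ofReal (ρ^n * K * (1-c)) :=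
        add_le_add hI1 hI2
    _ = ENNReal.ofReal (K * (k^n * (c^(n+1)/((n:ℝ)+1)) + ρ^n * (1-c))) := by
        have hn1 : (0:ℝ) ≤ K * k^n * (c^(n+1)/((n:ℝ)+1)) :=
          mul_nonneg (mul_nonneg hK0 (pow_nonneg hk0 n)) (by positivity)
        have hn2 : (0:ℝ) ≤ ρ^n * K * (1-c) :=
          mul_nonneg (mul_nonneg (pow_nonneg hρ0 n) hK0) (by linarith)
        rw [← ENNReal.ofReal_add hn1 hn2]
        congr 1
        ring

open RealInnerProductSpace in
lemma coneSet_measurable (n : ℕ) (c : ℝ) (x : EuclideanSpace ℝ (Fin (n+1))) :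
    MeasurableSet {z : EuclideanSpace ℝ (Fin (n+1)) | ‖z‖ ≤ 1 ∧ c * ‖z‖ ≤ ⟪x, z⟫} := by
  rw [Set.setOf_and]
  exact (measurableSet_le measurable_norm measurable_const).inter
    (measurableSet_le (measurable_norm.const_mul c)
      (Continuous.measurable (continuous_const.inner continuous_id)))

open RealInnerProductSpace in
lemma cone_vol_bound (n : ℕ) (hn : 2 ≤ n) (c ρ k : ℝ) (hc0 : 0 < c) (hc1 : c < 1)
    (hρ : ρ = Real.sqrt (1-c^2)) (hk : k = ρ/c)
    (x : EuclideanSpace ℝ (Fin (n+1))) (hx : ‖x‖ = 1) :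
    volume {z : EuclideanSpace ℝ (Fin (n+1)) | ‖z‖ ≤ 1 ∧ c * ‖z‖ ≤ ⟪x, z⟫} ≤
      ENNReal.ofReal (Real.sqrt π^n / Real.Gamma ((n:ℝ)/2+1) *
        (k^n * (c^(n+1)/((n:ℝ)+1)) + ρ^n * (1-c))) := by
  set e₀ : EuclideanSpace ℝ (Fin (n+1)) := EuclideanSpace.single (0 : Fin (n+1)) (1:ℝ) with he₀def
  have he₀ : ‖e₀‖ = 1 := by rw [he₀def, EuclideanSpace.norm_single]; norm_num
  set f := Submodule.reflection (ℝ ∙ (x - e₀))ᗮ with hf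
  have hfx : f x = e₀ := Submodule.reflection_sub (by rw [hx, he₀])
  have hpre : f ⁻¹' {z : EuclideanSpace ℝ (Fin (n+1)) | ‖z‖ ≤ 1 ∧ c * ‖z‖ ≤ ⟪e₀, z⟫}
      = {z : EuclideanSpace ℝ (Fin (n+1)) | ‖z‖ ≤ 1 ∧ c * ‖z‖ ≤ ⟪x, z⟫} := by
    ext z
    simp only [Set.mem_preimage, Set.mem_setOf_eq]
    rw [LinearIsometryEquiv.norm_map, ← hfx, LinearIsometryEquiv.inner_map_map]
  calc volume {z : EuclideanSpace ℝ (Fin (n+1)) | ‖z‖ ≤ 1 ∧ c * ‖z‖ ≤ ⟪x, z⟫}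
      = volume (f ⁻¹' {z : EuclideanSpace ℝ (Fin (n+1)) | ‖z‖ ≤ 1 ∧ c * ‖z‖ ≤ ⟪e₀, z⟫}) := by
        rw [hpre]
    _ = volume {z : EuclideanSpace ℝ (Fin (n+1)) | ‖z‖ ≤ 1 ∧ c * ‖z‖ ≤ ⟪e₀, z⟫} :=
        f.measurePreserving.measure_preimage (coneSet_measurable n c e₀).nullMeasurableSet
    _ ≤ _ := by rw [he₀def]; exact cone_vol_bound_e0 n hn c ρ k hc0 hc1 hρ hk


/-- The uniform probability measure on the unit sphere `S^{d-1} ⊆ ℝ^d`, viewed as a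
measure on `ℝ^d`. -/
noncomputable def sphereUniform (d : ℕ) : Measure (EuclideanSpace ℝ (Fin d)) :=
  Measure.map Subtype.val
    ((((volume : Measure (EuclideanSpace ℝ (Fin d))).toSphere Set.univ)⁻¹ •
      (volume : Measure (EuclideanSpace ℝ (Fin d))).toSphere))

/-- If `u₁, u₂` are independent uniformly distributed random points on the unit sphere
`S^{d-1} ⊆ ℝ^d` with `d ≥ 3`, then for every `η ∈ (0,1)`,
`P(‖u₁ - u₂‖ ≤ η) < η^{d-1}`. -/
theorem prob_close_uniform_sphere_points {Ω : Type*} [MeasureSpace Ω]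
    [IsProbabilityMeasure (ℙ : Measure Ω)]
    (d : ℕ) (hd : 3 ≤ d) (u₁ u₂ : Ω → EuclideanSpace ℝ (Fin d))
    (h₁ : Measurable u₁) (h₂ : Measurable u₂)
    (hlaw₁ : Measure.map u₁ ℙ = sphereUniform d)
    (hlaw₂ : Measure.map u₂ ℙ = sphereUniform d)
    (hindep : IndepFun u₁ u₂ ℙ)
    (η : ℝ) (hη : η ∈ Set.Ioo (0 : ℝ) 1) :
    ℙ {ω | ‖u₁ ω - u₂ ω‖ ≤ η} < ENNReal.ofReal (η ^ (d - 1)) := by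
  obtain ⟨n, rfl⟩ : ∃ n, d = n + 1 := ⟨d - 1, by omega⟩
  have hn : 2 ≤ n := by omega
  obtain ⟨hη0, hη1⟩ := hη
  have hη2 : η^2 < 1 := by nlinarith
  set c : ℝ := 1 - η^2/2 with hc
  set ρ : ℝ := Real.sqrt (1-c^2) with hρ
  set k : ℝ := ρ/c with hk
  have hc0 : 0 < c := by rw [hc]; linarith
  have hc1 : c < 1 := by
    rw [hc]; have : 0 < η^2 := pow_pos hη0 2; linarith
  set W : ℝ := Real.sqrt π ^ n / Real.Gamma ((n:ℝ)/2+1) *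
      (k ^ n * (c^(n+1)/((n:ℝ)+1)) + ρ ^ n * (1-c)) with hW
  set V : ℝ := Real.sqrt π ^ (n+1) / Real.Gamma (((n:ℝ)+1)/2+1) with hV
  have hVpos : 0 < V := by
    rw [hV]
    have := Real.Gamma_pos_of_pos (show (0:ℝ) < ((n:ℝ)+1)/2+1 by positivity)
    positivity
  have hWV : W < η^n * V := key_ineq n hn η c ρ k hη0 hη1 hc hρ hk
  set μ : Measure (EuclideanSpace ℝ (Fin (n+1))) := sphereUniform (n+1) with hμ
  set ν := (volume : Measure (EuclideanSpace ℝ (Fin (n+1)))).toSphere with hν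
  have hdim : Module.finrank ℝ (EuclideanSpace ℝ (Fin (n+1))) = n+1 :=
    finrank_euclideanSpace_fin
  have hνuniv : ν Set.univ
      = (n+1 : ℕ) * volume (ball (0:EuclideanSpace ℝ (Fin (n+1))) 1) := by
    rw [hν, Measure.toSphere_apply_univ, hdim]
  have hVball : volume (ball (0:EuclideanSpace ℝ (Fin (n+1))) 1) = ENNReal.ofReal V := by
    have hcast : ((n+1 : ℕ) : ℝ) = (n:ℝ)+1 := by push_cast; ring
    rw [EuclideanSpace.volume_ball, hV]
    simp only [Fintype.card_fin, ENNReal.ofReal_one, one_pow, one_mul, hcast]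
  have hmap : ∀ A : Set (EuclideanSpace ℝ (Fin (n+1))), MeasurableSet A →
      μ A = (ν Set.univ)⁻¹ * ν (Subtype.val ⁻¹' A) := by
    intro A hA
    rw [hμ]
    show sphereUniform (n+1) A = _
    rw [sphereUniform, Measure.map_apply measurable_subtype_coe hA, Measure.smul_apply,
      smul_eq_mul]
  have hball_pos : 0 < volume (ball (0:EuclideanSpace ℝ (Fin (n+1))) 1) :=
    measure_ball_pos _ _ one_pos
  have hball_ne_top : volume (ball (0:EuclideanSpace ℝ (Fin (n+1))) 1) ≠ ⊤ :=
    measure_ball_lt_top.ne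
  have hν0 : ν Set.univ ≠ 0 := by
    rw [hνuniv]
    exact mul_ne_zero (by simp) hball_pos.ne'
  have hνtop : ν Set.univ ≠ ⊤ := by
    rw [hνuniv]
    exact ENNReal.mul_ne_top (ENNReal.natCast_ne_top _) hball_ne_top
  haveI hprob : IsProbabilityMeasure μ := by
    constructor
    rw [hmap _ MeasurableSet.univ, Set.preimage_univ, ENNReal.inv_mul_cancel hν0 hνtop]
  -- cap bound
  have hcap : ∀ x : EuclideanSpace ℝ (Fin (n+1)), ‖x‖ = 1 →
      μ (closedBall x η) ≤ ENNReal.ofReal W / ENNReal.ofReal V := by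
    intro x hx
    have hsub : Set.Ioo (0:ℝ) 1 • (Subtype.val '' (Subtype.val ⁻¹' closedBall x η :
        Set (sphere (0:EuclideanSpace ℝ (Fin (n+1))) 1))) ⊆
        {z : EuclideanSpace ℝ (Fin (n+1)) | ‖z‖ ≤ 1 ∧ c * ‖z‖ ≤ ⟪x, z⟫} := by
      rintro z hz
      rw [Set.mem_smul] at hz
      obtain ⟨r, hr, u, hu, rfl⟩ := hz
      obtain ⟨u', hu', rfl⟩ := hu
      have hun : ‖(u' : EuclideanSpace ℝ (Fin (n+1)))‖ = 1 := by
        have := u'.2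
        rwa [mem_sphere_zero_iff_norm] at this
      have hr0 : (0:ℝ) < r := hr.1
      have hr1 : r < 1 := hr.2
      have hdist : ‖x - (u' : EuclideanSpace ℝ (Fin (n+1)))‖ ≤ η := by
        have : dist (u' : EuclideanSpace ℝ (Fin (n+1))) x ≤ η := hu'
        rwa [dist_eq_norm, norm_sub_rev] at this
      have hinner : c ≤ ⟪x, (u' : EuclideanSpace ℝ (Fin (n+1)))⟫ := by
        have hns := norm_sub_sq_real x (u' : EuclideanSpace ℝ (Fin (n+1)))
        rw [hx, hun] at hns
        have hsq : ‖x - (u' : EuclideanSpace ℝ (Fin (n+1)))‖^2 ≤ η^2 :=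
          pow_le_pow_left₀ (norm_nonneg _) hdist 2
        rw [hc]
        nlinarith [hns, hsq]
      constructor
      · rw [norm_smul, Real.norm_eq_abs, abs_of_pos hr0, hun, mul_one]
        exact hr1.le
      · rw [norm_smul, Real.norm_eq_abs, abs_of_pos hr0, hun, mul_one,
          real_inner_smul_right]
        calc c * r = r * c := by ring
          _ ≤ r * ⟪x, (u' : EuclideanSpace ℝ (Fin (n+1)))⟫ :=
            mul_le_mul_of_nonneg_left hinner hr0.le
    have hcone := cone_vol_bound n hn c ρ k hc0 hc1 hρ hk x hx
    have hνcap : ν (Subtype.val ⁻¹' closedBall x η) ≤ (n+1 : ℕ) * ENNReal.ofReal W := by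
      rw [hν, Measure.toSphere_apply' _ (measurable_subtype_coe measurableSet_closedBall),
        hdim]
      exact mul_le_mul_right (le_trans (measure_mono hsub) hcone) _
    rw [hmap _ measurableSet_closedBall]
    calc (ν Set.univ)⁻¹ * ν (Subtype.val ⁻¹' closedBall x η)
        ≤ (ν Set.univ)⁻¹ * ((n+1 : ℕ) * ENNReal.ofReal W) := mul_le_mul_right hνcap _
      _ = ENNReal.ofReal W / ENNReal.ofReal V := by
          rw [hνuniv, hVball, ENNReal.mul_inv (Or.inl (by simp)) (Or.inl (ENNReal.natCast_ne_top _))]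
          rw [div_eq_mul_inv]
          rw [mul_mul_mul_comm, ENNReal.inv_mul_cancel (by simp) (ENNReal.natCast_ne_top _),
            one_mul, mul_comm]
  -- almost every point is on the sphere
  have hsphere_null : μ {x : EuclideanSpace ℝ (Fin (n+1)) | ‖x‖ = 1}ᶜ = 0 := by
    rw [hmap _ (isClosed_eq continuous_norm continuous_const).measurableSet.compl]
    have : (Subtype.val ⁻¹' {x : EuclideanSpace ℝ (Fin (n+1)) | ‖x‖ = 1}ᶜ :
        Set (sphere (0 : EuclideanSpace ℝ (Fin (n+1))) 1)) = ∅ := by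
      ext u
      simp only [Set.mem_preimage, Set.mem_compl_iff, Set.mem_setOf_eq,
        Set.mem_empty_iff_false, iff_false, not_not]
      exact norm_eq_of_mem_sphere u
    rw [this, measure_empty, mul_zero]
  have hbound_ae : ∀ᵐ x ∂μ, μ (closedBall x η) ≤ ENNReal.ofReal W / ENNReal.ofReal V := by
    have hae : ∀ᵐ x ∂μ, ‖x‖ = 1 := by
      rw [ae_iff]
      convert hsphere_null using 2
      rfl
    exact hae.mono fun x hx => hcap x hx
  -- product measure
  have hSmeas : MeasurableSet {p : EuclideanSpace ℝ (Fin (n+1)) × EuclideanSpace ℝ (Fin (n+1)) |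
      ‖p.1 - p.2‖ ≤ η} :=
    (isClosed_le ((continuous_fst.sub continuous_snd).norm) continuous_const).measurableSet
  have hjoint : Measure.map (fun ω => (u₁ ω, u₂ ω)) ℙ = μ.prod μ := by
    have h := (indepFun_iff_map_prod_eq_prod_map_map h₁.aemeasurable h₂.aemeasurable).1 hindep
    rw [hlaw₁, hlaw₂] at h
    exact h
  have hevent : ℙ {ω | ‖u₁ ω - u₂ ω‖ ≤ η}
      = (μ.prod μ) {p : EuclideanSpace ℝ (Fin (n+1)) × EuclideanSpace ℝ (Fin (n+1)) |
        ‖p.1 - p.2‖ ≤ η} := by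
    rw [← hjoint, Measure.map_apply (h₁.prodMk h₂) hSmeas]
    rfl
  have hprod : (μ.prod μ) {p : EuclideanSpace ℝ (Fin (n+1)) × EuclideanSpace ℝ (Fin (n+1)) |
      ‖p.1 - p.2‖ ≤ η} = ∫⁻ x, μ (closedBall x η) ∂μ := by
    rw [Measure.prod_apply hSmeas]
    congr 1
    funext x
    congr 1
    ext y
    simp only [Set.mem_preimage, Set.mem_setOf_eq, mem_closedBall, dist_eq_norm, norm_sub_rev]
  have hlast : ENNReal.ofReal W / ENNReal.ofReal V < ENNReal.ofReal (η^n) := by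
    rw [ENNReal.div_lt_iff (Or.inl (ENNReal.ofReal_pos.mpr hVpos).ne')
      (Or.inl ENNReal.ofReal_ne_top)]
    rw [← ENNReal.ofReal_mul (pow_nonneg hη0.le n)]
    exact (ENNReal.ofReal_lt_ofReal_iff (by positivity)).mpr hWV
  have hfin : ℙ {ω | ‖u₁ ω - u₂ ω‖ ≤ η} < ENNReal.ofReal (η ^ n) := by
    rw [hevent, hprod]
    calc ∫⁻ x, μ (closedBall x η) ∂μ
        ≤ ∫⁻ _, ENNReal.ofReal W / ENNReal.ofReal V ∂μ := lintegral_mono_ae hbound_ae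
      _ = ENNReal.ofReal W / ENNReal.ofReal V := by
          rw [lintegral_const, measure_univ, mul_one]
      _ < ENNReal.ofReal (η^n) := hlast
  simpa using hfin
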